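/- Let R > 0, let l₂ > 0 with l₂ < πR, set α₂ := sin(l₂/(2R)), and let ν satisfy α₂ < ν ≤ 1. With h_±(x) := (1/ν)( −sin²[x/(2R)] ± cos[x/(2R)]√(ν² − sin²[x/(2R)]) ) and Δs* := 2R·arcsin ν, one has ∫₀^{Δs* − l₂} ( h₊(σ + l₂) − h₋(σ + l₂) ) dσ = πRν − 2H(α₂,ν), where H(α,ν) := R( (α/ν)√(ν² − α²) + ν arcsin(α/ν) ). -/

import Mathlib

open Real intervalIntegral

/-- `h₊(x) = (1/ν)(−sin²[x/(2R)] + cos[x/(2R)] √(ν² − sin²[x/(2R)]))`. -/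
noncomputable def hPlus (R ν x : ℝ) : ℝ :=
  (1 / ν) * (-(sin (x / (2 * R))) ^ 2
    + cos (x / (2 * R)) * Real.sqrt (ν ^ 2 - (sin (x / (2 * R))) ^ 2))

/-- `h₋(x) = (1/ν)(−sin²[x/(2R)] − cos[x/(2R)] √(ν² − sin²[x/(2R)]))`. -/
noncomputable def hMinus (R ν x : ℝ) : ℝ :=
  (1 / ν) * (-(sin (x / (2 * R))) ^ 2
    - cos (x / (2 * R)) * Real.sqrt (ν ^ 2 - (sin (x / (2 * R))) ^ 2))

/-- `H(α,ν) = R((α/ν)√(ν² − α²) + ν arcsin(α/ν))`. -/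
noncomputable def Hfun (R α ν : ℝ) : ℝ :=
  R * ((α / ν) * Real.sqrt (ν ^ 2 - α ^ 2) + ν * arcsin (α / ν))

set_option maxHeartbeats 1000000 in
/-- For `0 < l₂ < πR`, `α₂ = sin(l₂/(2R))` and `α₂ < ν ≤ 1`, with
`Δs* = 2R arcsin ν`, one has
`∫₀^{Δs* − l₂} (h₊(σ + l₂) − h₋(σ + l₂)) dσ = πRν − 2H(α₂,ν)`. -/
theorem integral_h_shifted (R ν l₂ : ℝ) (hR : 0 < R)
    (hl₂ : 0 < l₂) (hl₂' : l₂ < π * R)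
    (hν : sin (l₂ / (2 * R)) < ν) (hν1 : ν ≤ 1) :
    ∫ σ in (0 : ℝ)..(2 * R * arcsin ν - l₂),
        (hPlus R ν (σ + l₂) - hMinus R ν (σ + l₂)) =
      π * R * ν - 2 * Hfun R (sin (l₂ / (2 * R))) ν := by
  have hRne : (2 * R) ≠ 0 := by positivity
  have hθ0 : 0 < l₂ / (2 * R) := by positivity
  have hθlt : l₂ / (2 * R) < π / 2 := by
    rw [div_lt_div_iff₀ (by positivity) two_pos]; nlinarith
  have hsinθ : 0 < sin (l₂ / (2 * R)) :=
    sin_pos_of_pos_of_lt_pi hθ0 (by nlinarith [pi_pos])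
  have hν0 : 0 < ν := lt_trans hsinθ hν
  have ha : arcsin ν ≤ π / 2 := arcsin_le_pi_div_two ν
  have hsina : sin (arcsin ν) = ν := sin_arcsin (by linarith) hν1
  have hθa : l₂ / (2 * R) < arcsin ν :=
    (lt_arcsin_iff_sin_lt' ⟨by linarith, hθlt⟩).2 hν
  have hb : 0 ≤ 2 * R * arcsin ν - l₂ := by
    have : l₂ = 2 * R * (l₂ / (2 * R)) := by field_simp
    nlinarith
  set g : ℝ → ℝ := fun σ => 2 * Hfun R (sin ((σ + l₂) / (2 * R))) ν with hg
  have hderiv : ∀ σ ∈ Set.Ioo (0 : ℝ) (2 * R * arcsin ν - l₂),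
      HasDerivAt g (hPlus R ν (σ + l₂) - hMinus R ν (σ + l₂)) σ := by
    intro σ hσ
    set u : ℝ := (σ + l₂) / (2 * R) with hu
    have hu1 : l₂ / (2 * R) < u := by
      rw [hu, div_lt_div_iff₀ (by positivity) (by positivity)]
      nlinarith [hσ.1]
    have hu2 : u < arcsin ν := by
      rw [hu, div_lt_iff₀ (by positivity)]
      nlinarith [hσ.2]
    have hsinu0 : 0 < sin u :=
      sin_pos_of_pos_of_lt_pi (lt_trans hθ0 hu1) (by nlinarith [pi_pos])
    have hsinuν : sin u < ν := by
      calc sin u < sin (arcsin ν) :=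
            sin_lt_sin_of_lt_of_le_pi_div_two (by linarith) ha hu2
        _ = ν := hsina
    have hsq : (sin u) ^ 2 < ν ^ 2 := by nlinarith
    have hd : 0 < ν ^ 2 - (sin u) ^ 2 := by linarith
    have hsqrt0 : 0 < Real.sqrt (ν ^ 2 - (sin u) ^ 2) := Real.sqrt_pos.2 hd
    -- derivative of the inner function σ ↦ sin ((σ + l₂)/(2R))
    have hlin : HasDerivAt (fun σ : ℝ => (σ + l₂) / (2 * R)) (1 / (2 * R)) σ := by
      simpa using ((hasDerivAt_id σ).add_const l₂).div_const (2 * R)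
    have hsin : HasDerivAt (fun σ : ℝ => sin ((σ + l₂) / (2 * R)))
        (cos u * (1 / (2 * R))) σ := by
      have h := (Real.hasDerivAt_sin u).comp σ hlin; exact h
    -- derivative of t ↦ 2 * Hfun R t ν at t = sin u
    have hqt : HasDerivAt (fun t : ℝ => ν ^ 2 - t ^ 2) (-(2 * sin u)) (sin u) := by
      simpa using ((hasDerivAt_pow 2 (sin u)).const_sub (ν ^ 2))
    have hsqrtD : HasDerivAt (fun t : ℝ => Real.sqrt (ν ^ 2 - t ^ 2))
        (-(2 * sin u) / (2 * Real.sqrt (ν ^ 2 - (sin u) ^ 2))) (sin u) := by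
      have := (Real.hasDerivAt_sqrt hd.ne').comp (sin u) hqt
      refine this.congr_deriv (Eq.symm ?_); field_simp
    have h1 : HasDerivAt (fun t : ℝ => (t / ν) * Real.sqrt (ν ^ 2 - t ^ 2))
        ((1 / ν) * Real.sqrt (ν ^ 2 - (sin u) ^ 2)
          + (sin u / ν) * (-(2 * sin u) / (2 * Real.sqrt (ν ^ 2 - (sin u) ^ 2))))
        (sin u) := by
      have := (((hasDerivAt_id (sin u)).div_const ν).mul hsqrtD)
      exact this
    have hnn1 : sin u / ν ≠ -1 := by
      have : 0 < sin u / ν := by positivity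
      linarith
    have hnn2 : sin u / ν ≠ 1 := by
      have : sin u / ν < 1 := (div_lt_one hν0).2 hsinuν
      linarith
    have h2 : HasDerivAt (fun t : ℝ => ν * arcsin (t / ν))
        (ν * ((1 / Real.sqrt (1 - (sin u / ν) ^ 2)) * (1 / ν))) (sin u) := by
      have := ((Real.hasDerivAt_arcsin hnn1 hnn2).comp (sin u)
        ((hasDerivAt_id (sin u)).div_const ν)).const_mul ν
      simpa using this
    have hsq1 : Real.sqrt (1 - (sin u / ν) ^ 2) = Real.sqrt (ν ^ 2 - (sin u) ^ 2) / ν := by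
      rw [show (1 : ℝ) - (sin u / ν) ^ 2 = (ν ^ 2 - (sin u) ^ 2) / ν ^ 2 by
        field_simp, Real.sqrt_div hd.le, Real.sqrt_sq hν0.le]
    have hF : HasDerivAt (fun t : ℝ => 2 * Hfun R t ν)
        (2 * R * (2 * Real.sqrt (ν ^ 2 - (sin u) ^ 2) / ν)) (sin u) := by
      have := ((h1.add h2).const_mul R).const_mul 2
      refine this.congr_deriv (Eq.symm ?_)
      rw [hsq1]
      have hs2 : Real.sqrt (ν ^ 2 - (sin u) ^ 2) ^ 2 = ν ^ 2 - (sin u) ^ 2 :=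
        Real.sq_sqrt hd.le
      field_simp
      linear_combination hs2
    have := hF.comp σ hsin
    refine this.congr_deriv (Eq.symm ?_)
    have hx : (σ + l₂) / (2 * R) = u := rfl
    simp only [hPlus, hMinus, hx, Function.comp]
    field_simp
    ring
  have hcont : ContinuousOn g (Set.Icc 0 (2 * R * arcsin ν - l₂)) := by
    apply Continuous.continuousOn
    have hc1 : Continuous fun σ : ℝ => sin ((σ + l₂) / (2 * R)) := by fun_prop
    have hHc : Continuous fun t : ℝ => 2 * Hfun R t ν := by
      simp only [Hfun]
      exact continuous_const.mul (continuous_const.mul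
        (((continuous_id.div_const ν).mul
            ((continuous_const.sub (continuous_pow 2)).sqrt)).add
          (continuous_const.mul (Real.continuous_arcsin.comp
            (continuous_id.div_const ν)))))
    exact hHc.comp hc1
  have hint : IntervalIntegrable (fun σ => hPlus R ν (σ + l₂) - hMinus R ν (σ + l₂))
      MeasureTheory.volume 0 (2 * R * arcsin ν - l₂) := by
    apply Continuous.intervalIntegrable
    simp only [hPlus, hMinus]
    fun_prop
  rw [intervalIntegral.integral_eq_sub_of_hasDerivAt_of_le hb hcont hderiv hint]
  have hgb : g (2 * R * arcsin ν - l₂) = π * R * ν := by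
    simp only [hg, Hfun]
    rw [show 2 * R * arcsin ν - l₂ + l₂ = 2 * R * arcsin ν from by ring,
      mul_div_cancel_left₀ _ hRne, hsina, div_self hν0.ne', Real.arcsin_one,
      sub_self, Real.sqrt_zero]
    ring
  have hga : g 0 = 2 * Hfun R (sin (l₂ / (2 * R))) ν := by
    simp only [hg, zero_add]
  rw [hgb, hga]
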